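/- Let K be a nonempty closed convex subset of a Hilbert space H, a(·,·) a continuous coercive symmetric bilinear form on H, and f a continuous linear functional. Then u ∈ K minimizes (1/2)a(v,v) − f(v) over K if and only if a(u, v − u) ≥ f(v − u) for all v ∈ K. -/

import Mathlib

/-- Characterization of the minimizer of `v ↦ (1/2) a(v,v) - f(v)` over a nonempty
closed convex subset `K` of a real Hilbert space by the variational inequality
`a(u, v - u) ≥ f(v - u)` for all `v ∈ K`, for a continuous coercive symmetric
bilinear form `a` and a continuous linear functional `f`. -/
theorem minimizer_iff_variational_inequality
    {H : Type*} [NormedAddCommGroup H] [InnerProductSpace ℝ H] [CompleteSpace H]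
    (a : H →ₗ[ℝ] H →ₗ[ℝ] ℝ) (hsymm : ∀ v w, a v w = a w v)
    (Cb : ℝ) (hbdd : ∀ v w, |a v w| ≤ Cb * ‖v‖ * ‖w‖)
    (α : ℝ) (hα : 0 < α) (hcoer : ∀ v, α * ‖v‖ ^ 2 ≤ a v v)
    (f : H →L[ℝ] ℝ)
    (K : Set H) (hKne : K.Nonempty) (hKcl : IsClosed K) (hKcv : Convex ℝ K)
    (u : H) (huK : u ∈ K) :
    (∀ v ∈ K, (1 / 2) * a u u - f u ≤ (1 / 2) * a v v - f v) ↔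
      (∀ v ∈ K, f (v - u) ≤ a u (v - u)) := by
  have hnn : ∀ w : H, (0:ℝ) ≤ a w w := fun w =>
    le_trans (by positivity) (hcoer w)
  constructor
  · intro hmin v hvK
    set w : H := v - u with hw
    set c : ℝ := a w w with hc
    have hcnn : (0:ℝ) ≤ c := hnn w
    by_contra hlt
    push_neg at hlt
    set δ : ℝ := f w - a u w with hδ
    have hδpos : 0 < δ := sub_pos.mpr hlt
    set t : ℝ := min 1 (δ / (c + 1)) with ht
    have htpos : 0 < t := lt_min one_pos (by positivity)
    have ht1 : t ≤ 1 := min_le_left _ _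
    have hmem : u + t • w ∈ K := by
      have := hKcv huK hvK (a := 1 - t) (b := t) (by linarith) htpos.le (by ring)
      have heq : (1 - t) • u + t • v = u + t • w := by
        rw [hw]; rw [smul_sub]; module
      rwa [heq] at this
    have hkey := hmin (u + t • w) hmem
    have hexp : a (u + t • w) (u + t • w)
        = a u u + 2 * t * a u w + t * t * c := by
      simp only [map_add, map_smul, LinearMap.add_apply, LinearMap.smul_apply,
        smul_eq_mul, hc]
      rw [hsymm w u]; ring
    have hfexp : f (u + t • w) = f u + t * f w := by
      simp [map_add, map_smul]
    rw [hexp, hfexp] at hkey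
    -- from hkey: 0 ≤ t * a u w + t*t/2 * c - t * f w = -t*δ + t*t/2*c
    have h1 : t * δ ≤ t * t / 2 * c := by nlinarith
    have h2 : δ ≤ t / 2 * c := by
      have := (mul_le_mul_iff_right₀ htpos).mp (by linarith [h1] : t * δ ≤ t * (t / 2 * c))
      linarith
    have htsmall : t ≤ δ / (c + 1) := min_le_right _ _
    have h3 : t / 2 * c < δ := by
      have : t * (c + 1) ≤ δ := by
        have := mul_le_mul_of_nonneg_right htsmall (by positivity : (0:ℝ) ≤ c + 1)
        rwa [div_mul_cancel₀ _ (by positivity : (c:ℝ) + 1 ≠ 0)] at this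
      nlinarith
    linarith
  · intro hvi v hvK
    have h := hvi v hvK
    set w : H := v - u with hw
    have hv : v = u + w := by rw [hw]; abel
    have hexp : a v v = a u u + 2 * a u w + a w w := by
      rw [hv]
      simp only [map_add, LinearMap.add_apply]
      rw [hsymm w u]; ring
    have hfexp : f v = f u + f w := by rw [hv, map_add]
    rw [hexp, hfexp]
    have := hnn w
    linarith
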